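/- arXiv:1710.05236 — 3 statements merged into one kernel-verified Lean document; each statement's English description precedes it below -/
import Mathlib

section
/- Every maximal solution φ of the ODE φ'(x) = 2(1+φ(x)²) - (1/r)(1+φ(x)²)^{3/2} with φ(0) = 0, where r > 1, satisfies 0 ≤ φ(x) ≤ √(4r²-1) for all x > 0 in its domain. -/
theorem stmt9 (r : ℝ) (hr : 1 < r) (a b : ℝ) (ha : a < 0) (hb : 0 < b)
    (φ : ℝ → ℝ)
    (hode : ∀ x ∈ Set.Ioo a b,
      HasDerivAt φ (2 * (1 + (φ x) ^ 2) - (1 / r) * (1 + (φ x) ^ 2) ^ ((3 : ℝ) / 2)) x)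
    (hinit : φ 0 = 0) :
    ∀ x ∈ Set.Ioo a b, 0 < x → 0 ≤ φ x ∧ φ x ≤ Real.sqrt (4 * r ^ 2 - 1) := by
  intro x hx hx0
  have hr0 : (0:ℝ) < r := lt_trans one_pos hr
  set M : ℝ := Real.sqrt (4 * r ^ 2 - 1) with hM
  have h4r : (0:ℝ) ≤ 4 * r ^ 2 - 1 := by nlinarith
  have hM2 : M ^ 2 = 4 * r ^ 2 - 1 := Real.sq_sqrt h4r
  have hMpos : 0 < M := Real.sqrt_pos.mpr (by nlinarith)
  -- the vector field
  set g : ℝ → ℝ := fun y => (1 + y ^ 2) * (2 - Real.sqrt (1 + y ^ 2) / r) with hgdef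
  have hq : ∀ y : ℝ, (0:ℝ) < 1 + y ^ 2 := fun y => by positivity
  have hgen : ∀ y : ℝ, g y = 2 * (1 + y ^ 2) - (1 / r) * (1 + y ^ 2) ^ ((3:ℝ)/2) := by
    intro y
    have h1 : (1 + y ^ 2 : ℝ) ^ ((3:ℝ)/2) = (1 + y ^ 2) * Real.sqrt (1 + y ^ 2) := by
      rw [show (3:ℝ)/2 = 1 + 1/2 by norm_num, Real.rpow_add (hq y), Real.rpow_one,
        ← Real.sqrt_eq_rpow]
    rw [hgdef]
    dsimp only
    rw [h1]
    field_simp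
  have hode' : ∀ t ∈ Set.Ioo a b, HasDerivAt φ (g (φ t)) t := by
    intro t ht
    rw [hgen]
    exact hode t ht
  have h1M : 1 + M ^ 2 = 4 * r ^ 2 := by rw [hM2]; ring
  have hsqrt4r : Real.sqrt (4 * r ^ 2) = 2 * r := by
    rw [show (4:ℝ) * r ^ 2 = (2*r)^2 by ring, Real.sqrt_sq (by positivity)]
  have hgM : g M = 0 := by
    rw [hgdef]
    dsimp only
    rw [h1M, hsqrt4r]
    field_simp
    ring
  have hgM' : g (-M) = 0 := by
    rw [hgdef]
    dsimp only
    rw [neg_pow, show ((-1:ℝ))^2 = 1 by norm_num, one_mul, h1M, hsqrt4r]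
    field_simp
    ring
  -- derivative of g
  set d : ℝ → ℝ := fun y => 2*y * (2 - Real.sqrt (1 + y ^ 2) / r)
      + (1 + y ^ 2) * (-((1 / (2 * Real.sqrt (1 + y ^ 2)) * (2*y)) / r)) with hddef
  have hsq : ∀ y : ℝ, HasDerivAt (fun y : ℝ => Real.sqrt (1 + y ^ 2))
      (1 / (2 * Real.sqrt (1 + y ^ 2)) * (2*y)) y := by
    intro y
    have h1 : HasDerivAt (fun y : ℝ => 1 + y ^ 2) (2*y) y := by
      simpa using ((hasDerivAt_pow 2 y).const_add 1)
    exact (Real.hasDerivAt_sqrt (ne_of_gt (hq y))).comp y h1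
  have hd : ∀ y : ℝ, HasDerivAt g (d y) y := by
    intro y
    have h1 : HasDerivAt (fun y : ℝ => 1 + y ^ 2) (2*y) y := by
      simpa using ((hasDerivAt_pow 2 y).const_add 1)
    have h2 : HasDerivAt (fun y : ℝ => 2 - Real.sqrt (1 + y ^ 2) / r)
        (-((1 / (2 * Real.sqrt (1 + y ^ 2)) * (2*y)) / r)) y :=
      ((hsq y).div_const r).const_sub 2
    exact h1.mul h2
  have hcsqrt : Continuous fun y : ℝ => Real.sqrt (1 + y ^ 2) :=
    (continuous_const.add (continuous_pow 2)).sqrt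
  have hcd : Continuous d := by
    have hne : ∀ y : ℝ, 2 * Real.sqrt (1 + y ^ 2) ≠ 0 := by
      intro y
      have : 0 < Real.sqrt (1 + y ^ 2) := Real.sqrt_pos.mpr (hq y)
      positivity
    rw [hddef]
    exact ((continuous_const.mul continuous_id).mul
        (continuous_const.sub (hcsqrt.div_const r))).add
      ((continuous_const.add (continuous_pow 2)).mul
        ((((continuous_const.div (continuous_const.mul hcsqrt) hne).mul
          (continuous_const.mul continuous_id)).div_const r).neg))
  -- the compact interval and bounds
  have hsub : Set.Icc 0 x ⊆ Set.Ioo a b := fun t ht =>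
    ⟨lt_of_lt_of_le ha ht.1, lt_of_le_of_lt ht.2 hx.2⟩
  have hφc : ContinuousOn φ (Set.Icc 0 x) := fun t ht =>
    ((hode' t (hsub ht)).continuousAt).continuousWithinAt
  obtain ⟨C, hC⟩ := isCompact_Icc.exists_bound_of_continuousOn hφc
  set C' : ℝ := max C M with hC'def
  have hMC' : M ≤ C' := le_max_right _ _
  have hC'0 : 0 < C' := lt_of_lt_of_le hMpos hMC'
  have hmem : ∀ t ∈ Set.Icc 0 x, φ t ∈ Set.Icc (-C') C' := by
    intro t ht
    have h1 : |φ t| ≤ C := hC t ht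
    have h2 := abs_le.mp h1
    constructor
    · linarith [le_max_left C M, h2.1]
    · linarith [le_max_left C M, h2.2]
  -- Lipschitz bound on Icc (-C') C'
  obtain ⟨L, hL⟩ := isCompact_Icc.exists_bound_of_continuousOn
    (hcd.continuousOn (s := Set.Icc (-C') C'))
  have hL0 : 0 ≤ L := le_trans (norm_nonneg _) (hL 0 ⟨by linarith, by linarith⟩)
  have hlip : LipschitzOnWith L.toNNReal g (Set.Icc (-C') C') := by
    apply (convex_Icc _ _).lipschitzOnWith_of_nnnorm_hasDerivWithin_le
      (f' := d) (fun y hy => (hd y).hasDerivWithinAt)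
    intro y hy
    rw [← NNReal.coe_le_coe, coe_nnnorm, Real.coe_toNNReal L hL0]
    exact hL y hy
  -- key: φ can't hit an equilibrium value c on [0, x]
  have key : ∀ c : ℝ, g c = 0 → c ∈ Set.Icc (-C') C' →
      ∀ t ∈ Set.Icc 0 x, φ t = c → (0:ℝ) = c := by
    intro c hgc hcmem t ht hφt
    have h1 : Set.EqOn φ (fun _ => c) (Set.Icc 0 t) :=
      ODE_solution_unique_of_mem_Icc_left (v := fun _ y => g y)
        (s := fun _ => Set.Icc (-C') C') (fun _ _ => hlip)
        (hφc.mono (Set.Icc_subset_Icc_right ht.2))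
        (fun u hu => (hode' u (hsub ⟨le_of_lt hu.1, le_trans hu.2 ht.2⟩)).hasDerivWithinAt)
        (fun u hu => hmem u ⟨le_of_lt hu.1, le_trans hu.2 ht.2⟩)
        continuousOn_const
        (fun u hu => by simpa [hgc] using (hasDerivWithinAt_const u (Set.Iic u) c))
        (fun u hu => hcmem) hφt
    have h2 := h1 ⟨le_refl 0, ht.1⟩
    rw [hinit] at h2
    exact h2
  have hMmem : M ∈ Set.Icc (-C') C' := ⟨by linarith, hMC'⟩
  have hMmem' : -M ∈ Set.Icc (-C') C' := ⟨by linarith, by linarith⟩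
  -- strict bounds via IVT
  have hltM : ∀ t ∈ Set.Icc 0 x, φ t < M := by
    intro t ht
    by_contra h
    push_neg at h
    have hMval : M ∈ Set.Icc (φ 0) (φ t) := by rw [hinit]; exact ⟨hMpos.le, h⟩
    obtain ⟨u, hu, hφu⟩ := intermediate_value_Icc ht.1
      (hφc.mono (Set.Icc_subset_Icc_right ht.2)) hMval
    have := key M hgM hMmem u ⟨hu.1, le_trans hu.2 ht.2⟩ hφu
    linarith
  have hgtM : ∀ t ∈ Set.Icc 0 x, -M < φ t := by
    intro t ht
    by_contra h
    push_neg at h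
    have hMval : -M ∈ Set.Icc (φ t) (φ 0) := by
      rw [hinit]; exact ⟨h, by linarith⟩
    obtain ⟨u, hu, hφu⟩ := intermediate_value_Icc' ht.1
      (hφc.mono (Set.Icc_subset_Icc_right ht.2)) hMval
    have := key (-M) hgM' hMmem' u ⟨hu.1, le_trans hu.2 ht.2⟩ hφu
    linarith
  -- g is positive below the equilibrium
  have hgpos : ∀ y : ℝ, y ^ 2 < M ^ 2 → 0 < g y := by
    intro y hy
    have h1 : 1 + y ^ 2 < 4 * r ^ 2 := by rw [← h1M]; linarith
    have h2 : Real.sqrt (1 + y ^ 2) < 2 * r := by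
      calc Real.sqrt (1 + y ^ 2) < Real.sqrt (4 * r ^ 2) :=
            Real.sqrt_lt_sqrt (hq y).le h1
        _ = 2 * r := hsqrt4r
    have h3 : 0 < 2 - Real.sqrt (1 + y ^ 2) / r := by
      rw [sub_pos, div_lt_iff₀ hr0]
      linarith
    exact mul_pos (hq y) h3
  -- φ is strictly monotone on [0, x]
  have hmono : StrictMonoOn φ (Set.Icc 0 x) := by
    apply strictMonoOn_of_deriv_pos (convex_Icc 0 x) hφc
    intro t ht
    rw [interior_Icc] at ht
    have hde := hode' t (hsub (Set.Ioo_subset_Icc_self ht))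
    rw [hde.deriv]
    exact hgpos _ (sq_lt_sq' (hgtM t (Set.Ioo_subset_Icc_self ht))
      (hltM t (Set.Ioo_subset_Icc_self ht)))
  have h0mem : (0:ℝ) ∈ Set.Icc 0 x := ⟨le_refl 0, hx0.le⟩
  have hxmem : x ∈ Set.Icc 0 x := ⟨hx0.le, le_refl x⟩
  have hfinal := hmono h0mem hxmem hx0
  rw [hinit] at hfinal
  exact ⟨hfinal.le, (hltM x hxmem).le⟩
end

section
/- The solution φ of the Cauchy problem φ' = 2(1+φ²) - (1/r)(1+φ²)^{3/2}, φ(0) = 0 with r > 1 is defined on all of ℝ, is odd, and is monotone nondecreasing. -/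
open Real Set MeasureTheory intervalIntegral

noncomputable def gg (r y : ℝ) : ℝ := 2 * (1 + y ^ 2) - (1 / r) * (1 + y ^ 2) ^ ((3 : ℝ) / 2)

noncomputable def hh (r y : ℝ) : ℝ := (gg r y)⁻¹

noncomputable def FF (r u : ℝ) : ℝ := ∫ y in (0:ℝ)..u, hh r y

noncomputable def aa (r : ℝ) : ℝ := Real.sqrt (4 * r ^ 2 - 1)

section lemmas

variable {r : ℝ} (hr : 1 < r)
include hr

lemma aa_pos : 0 < aa r := Real.sqrt_pos.2 (by nlinarith)

lemma aa_sq : aa r ^ 2 = 4 * r ^ 2 - 1 := Real.sq_sqrt (by nlinarith)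

omit hr in
lemma gg_eq (y : ℝ) : gg r y = (1 + y ^ 2) * (2 - Real.sqrt (1 + y ^ 2) / r) := by
  have h0 : (0:ℝ) < 1 + y ^ 2 := by positivity
  have : (1 + y ^ 2) ^ ((3:ℝ)/2) = (1 + y ^ 2) * Real.sqrt (1 + y ^ 2) := by
    rw [show ((3:ℝ)/2) = 1 + 1/2 by norm_num, Real.rpow_add h0, Real.rpow_one,
      Real.sqrt_eq_rpow]
  rw [gg, this]; ring

lemma sqrt_lt_2r {y : ℝ} (hy : y ∈ Ioo (-aa r) (aa r)) : Real.sqrt (1 + y ^ 2) < 2 * r := by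
  have h1 : y ^ 2 < aa r ^ 2 := sq_lt_sq' hy.1 hy.2
  have h2 : 1 + y ^ 2 < (2 * r) ^ 2 := by rw [aa_sq hr] at h1; nlinarith
  have := Real.sqrt_lt_sqrt (by positivity) h2
  rwa [Real.sqrt_sq (by linarith)] at this

lemma gg_pos {y : ℝ} (hy : y ∈ Ioo (-aa r) (aa r)) : 0 < gg r y := by
  rw [gg_eq]
  have hs := sqrt_lt_2r hr hy
  have hr0 : (0:ℝ) < r := by linarith
  have : Real.sqrt (1 + y ^ 2) / r < 2 := by rw [div_lt_iff₀ hr0]; linarith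
  have h0 : (0:ℝ) < 1 + y ^ 2 := by positivity
  nlinarith

omit hr in
lemma gg_cont : Continuous (gg r) := by
  apply Continuous.sub
  · fun_prop
  · exact continuous_const.mul
      ((continuous_const.add (continuous_pow 2)).rpow_const (fun x => Or.inr (by norm_num)))

lemma hh_cont : ContinuousOn (hh r) (Ioo (-aa r) (aa r)) :=
  gg_cont.continuousOn.inv₀ fun y hy => (gg_pos hr hy).ne'

lemma mem0 : (0:ℝ) ∈ Ioo (-aa r) (aa r) := by
  constructor <;> [linarith [aa_pos hr]; exact aa_pos hr]

lemma hh_int {u v : ℝ} (hu : u ∈ Ioo (-aa r) (aa r)) (hv : v ∈ Ioo (-aa r) (aa r)) :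
    IntervalIntegrable (hh r) volume u v :=
  ((hh_cont hr).mono ((ordConnected_Ioo).uIcc_subset hu hv)).intervalIntegrable

lemma FF_deriv {u : ℝ} (hu : u ∈ Ioo (-aa r) (aa r)) : HasDerivAt (FF r) (hh r u) u :=
  intervalIntegral.integral_hasDerivAt_right (hh_int hr (mem0 hr) hu)
    (ContinuousOn.stronglyMeasurableAtFilter isOpen_Ioo (hh_cont hr) u hu)
    ((hh_cont hr).continuousAt (Ioo_mem_nhds hu.1 hu.2))

lemma FF_smono : StrictMonoOn (FF r) (Ioo (-aa r) (aa r)) := by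
  apply strictMonoOn_of_deriv_pos (convex_Ioo _ _)
  · exact fun u hu => (FF_deriv hr hu).continuousAt.continuousWithinAt
  · intro u hu
    rw [interior_Ioo] at hu
    rw [(FF_deriv hr hu).deriv]
    exact inv_pos.2 (gg_pos hr hu)

omit hr in
lemma hh_even (y : ℝ) : hh r (-y) = hh r y := by simp [hh, gg]

omit hr in
lemma FF_odd (u : ℝ) : FF r (-u) = - FF r u := by
  have h1 : (∫ x in u..(0:ℝ), hh r (-x)) = ∫ x in (-0:ℝ)..(-u), hh r x :=
    intervalIntegral.integral_comp_neg (fun x => hh r x)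
  simp only [hh_even, neg_zero] at h1
  rw [FF, FF, ← h1, intervalIntegral.integral_symm]

omit hr in
lemma FF_zero : FF r 0 = 0 := intervalIntegral.integral_same

lemma hh_lower {y : ℝ} (hy0 : 0 ≤ y) (hya : y < aa r) :
    (4 * aa r * (aa r - y))⁻¹ ≤ hh r y := by
  set a := aa r with ha_def
  have ha : 0 < a := aa_pos hr
  have hyI : y ∈ Ioo (-a) a := ⟨by linarith, hya⟩
  have hgpos := gg_pos hr hyI
  have hden : 0 < 4 * a * (a - y) := by nlinarith
  apply inv_anti₀ hgpos
  -- show gg r y ≤ 4 a (a - y)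
  rw [gg_eq]
  set s := Real.sqrt (1 + y ^ 2) with hs_def
  have hs0 : 0 ≤ s := Real.sqrt_nonneg _
  have hs2 : s ^ 2 = 1 + y ^ 2 := Real.sq_sqrt (by positivity)
  have hslt : s < 2 * r := sqrt_lt_2r hr hyI
  have ha2 : a ^ 2 = 4 * r ^ 2 - 1 := aa_sq hr
  have hr0 : (0:ℝ) < r := by linarith
  rw [div_eq_mul_inv, ← hs2]
  -- s^2 * (2 - s * r⁻¹) ≤ 4 a (a - y)
  rw [show s ^ 2 * (2 - s * r⁻¹) = s ^ 2 * (2 * r - s) * r⁻¹ by field_simp]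
  rw [show (4:ℝ) * a * (a - y) = 4 * r * a * (a - y) * r⁻¹ by field_simp]
  apply mul_le_mul_of_nonneg_right _ (by positivity)
  -- s^2 (2r - s) ≤ 4 r a (a - y)
  have key : (2 * r - s) * (2 * r + s) = (a - y) * (a + y) := by
    have : 4 * r ^ 2 - s ^ 2 = a ^ 2 - y ^ 2 := by rw [hs2, ha2]; ring
    nlinarith [this]
  have h1 : s ^ 2 ≤ 4 * r ^ 2 := by nlinarith
  have h2 : a + y ≤ 2 * a := by linarith
  have h3 : 0 ≤ a - y := by linarith
  have h4 : 0 < 2 * r + s := by linarith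
  -- s^2 (2r-s)(2r+s) = s^2 (a-y)(a+y) ≤ 4r^2 (a-y)(2a) = 8 r^2 a (a-y)
  -- 4 r a (a-y)(2r+s) ≥ 8 r^2 a (a-y)
  have h5 : s ^ 2 * (2 * r - s) * (2 * r + s) = s ^ 2 * ((a - y) * (a + y)) := by
    rw [mul_assoc, key]
  nlinarith [mul_nonneg (mul_nonneg h3 ha.le) hs0, mul_nonneg h3 hs0,
    mul_nonneg (mul_nonneg h3 ha.le) (mul_nonneg hr0.le hs0)]

lemma FF_big (M : ℝ) : ∃ u ∈ Ioo (-aa r) (aa r), M ≤ FF r u := by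
  set a := aa r with ha_def
  have ha : 0 < a := aa_pos hr
  rcases le_or_gt M 0 with hM | hM
  · exact ⟨0, mem0 hr, by rw [FF_zero]; exact hM⟩
  · set u := a - a * Real.exp (-(4 * a * M)) with hu_def
    have he1 : Real.exp (-(4 * a * M)) < 1 := by
      rw [Real.exp_lt_one_iff]; nlinarith
    have he0 : 0 < Real.exp (-(4 * a * M)) := Real.exp_pos _
    have hu0 : 0 < u := by nlinarith
    have hua : u < a := by nlinarith
    have huI : u ∈ Ioo (-a) a := ⟨by linarith, hua⟩
    refine ⟨u, huI, ?_⟩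
    have hle : (∫ y in (0:ℝ)..u, (4 * a * (a - y))⁻¹) ≤ FF r u := by
      apply intervalIntegral.integral_mono_on hu0.le _ (hh_int hr (mem0 hr) huI)
      · intro y hy
        exact hh_lower hr hy.1 (lt_of_le_of_lt hy.2 hua)
      · apply ContinuousOn.intervalIntegrable
        apply ContinuousOn.inv₀
        · fun_prop
        · intro y hy
          rw [uIcc_of_le hu0.le] at hy
          have : y ≤ u := hy.2
          nlinarith
    have hcalc : (∫ y in (0:ℝ)..u, (4 * a * (a - y))⁻¹)
        = (4 * a)⁻¹ * Real.log a - (4 * a)⁻¹ * Real.log (a - u) := by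
      have : ∀ y ∈ uIcc (0:ℝ) u,
          HasDerivAt (fun z => -((4 * a)⁻¹ * Real.log (a - z))) ((4 * a * (a - y))⁻¹) y := by
        intro y hy
        rw [uIcc_of_le hu0.le] at hy
        have hay : 0 < a - y := by have := hy.2; nlinarith
        have h1 : HasDerivAt (fun z : ℝ => a - z) (-1) y := by
          simpa using (hasDerivAt_id y).const_sub a
        have h2 := (h1.log hay.ne')
        have h3 := h2.const_mul ((4 * a)⁻¹)
        have h4 := h3.neg
        exact h4.congr_deriv (by field_simp)
      rw [intervalIntegral.integral_eq_sub_of_hasDerivAt this]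
      · ring
      · apply ContinuousOn.intervalIntegrable
        apply ContinuousOn.inv₀
        · fun_prop
        · intro y hy
          rw [uIcc_of_le hu0.le] at hy
          have : y ≤ u := hy.2
          nlinarith
    have hval : (4 * a)⁻¹ * Real.log a - (4 * a)⁻¹ * Real.log (a - u) = M := by
      have hau : a - u = a * Real.exp (-(4 * a * M)) := by rw [hu_def]; ring
      rw [hau, Real.log_mul ha.ne' (Real.exp_pos _).ne', Real.log_exp]
      field_simp
      ring
    rw [hcalc, hval] at hle
    exact hle

lemma FF_surj (x : ℝ) : ∃ u ∈ Ioo (-aa r) (aa r), FF r u = x := by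
  obtain ⟨u₂, hu₂, hx₂⟩ := FF_big hr x
  obtain ⟨u₁', hu₁', hx₁'⟩ := FF_big hr (-x)
  have hu₁ : -u₁' ∈ Ioo (-aa r) (aa r) := ⟨by linarith [hu₁'.2], by linarith [hu₁'.1]⟩
  have hx₁ : FF r (-u₁') ≤ x := by rw [FF_odd]; linarith
  have hle : -u₁' ≤ u₂ := by
    by_contra h
    push_neg at h
    have := FF_smono hr hu₂ hu₁ h
    linarith
  have hIcc : Icc (-u₁') u₂ ⊆ Ioo (-aa r) (aa r) := fun z hz =>
    ⟨lt_of_lt_of_le hu₁.1 hz.1, lt_of_le_of_lt hz.2 hu₂.2⟩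
  have hcont : ContinuousOn (FF r) (Icc (-u₁') u₂) := fun z hz =>
    (FF_deriv hr (hIcc hz)).continuousAt.continuousWithinAt
  have := intermediate_value_Icc hle hcont
  have hx : x ∈ Icc (FF r (-u₁')) (FF r u₂) := ⟨hx₁, hx₂⟩
  obtain ⟨c, hc, hfc⟩ := this hx
  exact ⟨c, hIcc hc, hfc⟩

end lemmas

theorem stmt11 (r : ℝ) (hr : 1 < r) :
    ∃ φ : ℝ → ℝ,
      (∀ x : ℝ,
        HasDerivAt φ (2 * (1 + (φ x) ^ 2) - (1 / r) * (1 + (φ x) ^ 2) ^ ((3 : ℝ) / 2)) x) ∧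
      φ 0 = 0 ∧ (∀ x : ℝ, φ (-x) = -φ x) ∧ Monotone φ := by
  classical
  set a := aa r with ha_def
  have hsurj := FF_surj hr
  set φ : ℝ → ℝ := fun x => Classical.choose (hsurj x) with hφ_def
  have hφ : ∀ x, φ x ∈ Ioo (-a) a ∧ FF r (φ x) = x := fun x =>
    ⟨(Classical.choose_spec (hsurj x)).1, (Classical.choose_spec (hsurj x)).2⟩
  have hinj := (FF_smono hr).injOn
  have hleft : ∀ u ∈ Ioo (-a) a, φ (FF r u) = u := fun u hu =>
    hinj (hφ _).1 hu (hφ _).2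
  have hzero : φ 0 = 0 := by
    have := hleft 0 (mem0 hr)
    rwa [FF_zero] at this
  have hmono : Monotone φ := by
    intro x y hxy
    by_contra h
    push_neg at h
    have := (FF_smono hr) (hφ y).1 (hφ x).1 h
    rw [(hφ x).2, (hφ y).2] at this
    linarith
  have hodd : ∀ x, φ (-x) = -φ x := by
    intro x
    have h1 : -φ x ∈ Ioo (-a) a := ⟨by linarith [(hφ x).1.2], by linarith [(hφ x).1.1]⟩
    have h2 : FF r (-φ x) = -x := by rw [FF_odd, (hφ x).2]
    have := hleft (-φ x) h1
    rw [h2] at this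
    rw [this]
  have himage : φ '' univ = Ioo (-a) a := by
    apply Subset.antisymm
    · rintro _ ⟨x, -, rfl⟩
      exact (hφ x).1
    · intro u hu
      exact ⟨FF r u, mem_univ _, hleft u hu⟩
  have hcont : ∀ x, ContinuousAt φ x := by
    intro x
    apply continuousAt_of_monotoneOn_of_image_mem_nhds (hmono.monotoneOn univ) Filter.univ_mem
    rw [himage]
    exact isOpen_Ioo.mem_nhds (hφ x).1
  refine ⟨φ, ?_, hzero, hodd, hmono⟩
  intro x
  have hd : HasDerivAt (FF r) (hh r (φ x)) (φ x) := FF_deriv hr (hφ x).1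
  have hne : hh r (φ x) ≠ 0 := (inv_pos.2 (gg_pos hr (hφ x).1)).ne'
  have := HasDerivAt.of_local_left_inverse (hcont x) hd hne
    (Filter.Eventually.of_forall fun y => (hφ y).2)
  rw [hh, inv_inv] at this
  exact this
end

section
/- Let φ be the global solution of φ' = 2(1+φ²) - (1/r)(1+φ²)^{3/2}, φ(0)=0, with r > 1. Then lim_{x→+∞} φ(x) = √(4r²-1). -/
open Filter Topology

theorem stmt12 (r : ℝ) (hr : 1 < r) (φ : ℝ → ℝ)
    (hode : ∀ x : ℝ,
      HasDerivAt φ (2 * (1 + (φ x) ^ 2) - (1 / r) * (1 + (φ x) ^ 2) ^ ((3 : ℝ) / 2)) x)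
    (hinit : φ 0 = 0) (hmono : Monotone φ)
    (hbound : ∀ x : ℝ, φ x ≤ Real.sqrt (4 * r ^ 2 - 1)) :
    Tendsto φ atTop (𝓝 (Real.sqrt (4 * r ^ 2 - 1))) := by
  have hr0 : 0 < r := by linarith
  set M := Real.sqrt (4 * r ^ 2 - 1) with hM
  have hBdd : BddAbove (Set.range φ) := ⟨M, by rintro _ ⟨x, rfl⟩; exact hbound x⟩
  set L := ⨆ x, φ x with hLdef
  have htend : Tendsto φ atTop (𝓝 L) := tendsto_atTop_ciSup hmono hBdd
  have hL0 : 0 ≤ L := by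
    have := le_ciSup hBdd 0
    rw [hinit] at this
    exact this
  set f : ℝ → ℝ := fun y => 2 * (1 + y ^ 2) - (1 / r) * (1 + y ^ 2) ^ ((3 : ℝ) / 2) with hf
  have hfc : Continuous f := by
    apply Continuous.sub
    · continuity
    · apply Continuous.mul continuous_const
      apply Continuous.rpow_const (by continuity)
      intro x; left; positivity
  -- derivative is nonneg
  have hd0 : ∀ x, 0 ≤ f (φ x) := by
    intro x
    have hslope : Tendsto (slope φ x) (𝓝[>] x) (𝓝 (f (φ x))) :=
      (hasDerivAt_iff_tendsto_slope.mp (hode x)).mono_left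
        (nhdsWithin_mono x fun y hy => ne_of_gt hy)
    refine ge_of_tendsto hslope ?_
    filter_upwards [self_mem_nhdsWithin] with y hy
    have : (0:ℝ) < y - x := sub_pos.mpr hy
    have hφ : φ x ≤ φ y := hmono (le_of_lt hy)
    simp only [slope_def_field, div_eq_inv_mul]
    exact mul_nonneg (inv_nonneg.mpr this.le) (sub_nonneg.mpr hφ)
  have hfL : Tendsto (fun x => f (φ x)) atTop (𝓝 (f L)) :=
    (hfc.tendsto L).comp htend
  have hfL0 : 0 ≤ f L := ge_of_tendsto hfL (Eventually.of_forall hd0)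
  clear_value f L
  -- f L = 0
  have hfLeq : f L = 0 := by
    by_contra hne
    have hc : 0 < f L := lt_of_le_of_ne hfL0 (Ne.symm hne)
    obtain ⟨x₀, hx₀⟩ : ∃ x₀, ∀ x ≥ x₀, f L / 2 ≤ f (φ x) := by
      have := hfL.eventually (eventually_ge_nhds (by linarith : f L / 2 < f L))
      exact this.exists_forall_of_atTop
    -- g is monotone on Ici x₀
    set g : ℝ → ℝ := fun x => φ x - f L / 2 * x with hg
    have hgd : ∀ x, HasDerivAt g (f (φ x) - f L / 2) x := by
      intro x
      have h1 : HasDerivAt (fun x : ℝ => f L / 2 * x) (f L / 2) x := by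
        simpa using (hasDerivAt_id x).const_mul (f L / 2)
      simpa only [hg, hf, Pi.sub_def] using (hode x).sub h1
    have hgmono : MonotoneOn g (Set.Ici x₀) := by
      apply monotoneOn_of_deriv_nonneg (convex_Ici x₀)
      · exact fun x _ => ((hgd x).continuousAt).continuousWithinAt
      · exact fun x _ => ((hgd x).differentiableAt).differentiableWithinAt
      · intro x hx
        rw [interior_Ici] at hx
        rw [(hgd x).deriv]
        have := hx₀ x (le_of_lt hx)
        linarith
    -- derive contradiction: φ unbounded
    set X := x₀ + (M - φ x₀ + 1) * 2 / f L with hX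
    clear_value X
    have hXge : x₀ ≤ X := by
      have h1 : 0 ≤ M - φ x₀ := sub_nonneg.mpr (hbound x₀)
      have : 0 ≤ (M - φ x₀ + 1) * 2 / f L :=
        div_nonneg (by linarith) (le_of_lt hc)
      linarith
    have := hgmono (Set.self_mem_Ici) (Set.mem_Ici.mpr hXge) hXge
    simp only [hg] at this
    have hXval : f L / 2 * (X - x₀) = M - φ x₀ + 1 := by
      rw [hX]
      field_simp
      ring
    have hφX : M + 1 ≤ φ X := by linarith [hXval]
    have := hbound X
    linarith
  -- algebra: L = M
  have hueq : Real.sqrt (1 + L ^ 2) = 2 * r := by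
    have hu0 : (0:ℝ) < 1 + L ^ 2 := by positivity
    have h32 : (1 + L ^ 2) ^ ((3:ℝ)/2) = (1 + L ^ 2) * Real.sqrt (1 + L ^ 2) := by
      rw [Real.sqrt_eq_rpow]
      rw [← Real.rpow_one_add' (by positivity) (by norm_num)]
      norm_num
    rw [hf] at hfLeq
    simp only at hfLeq
    rw [h32] at hfLeq
    have hs0 : 0 < Real.sqrt (1 + L ^ 2) := Real.sqrt_pos.mpr hu0
    have : 2 * r * (1 + L ^ 2) = (1 + L ^ 2) * Real.sqrt (1 + L ^ 2) := by
      field_simp at hfLeq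
      linarith
    nlinarith
  have hLsq : L ^ 2 = 4 * r ^ 2 - 1 := by
    have := Real.sq_sqrt (le_of_lt (by positivity : (0:ℝ) < 1 + L ^ 2))
    rw [hueq] at this
    nlinarith
  have hLM : L = M := by
    rw [hM, ← hLsq, Real.sqrt_sq hL0]
  rw [← hLM]
  exact htend
end
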